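/- Let g ∈ L¹([0,∞)), g ≥ 0, and let ψ : [0,∞) → ℝ be defined by ψ(t) = max(2ε, h(t)) for a C¹ function h : [0,∞) → ℝ satisfying h'(t) ≤ -A(t) + C·h(t)·g(t) whenever h(t) ≥ 2ε, where A ≥ 0 and ε, C > 0. If additionally h is bounded (say h ≤ M), then ∫₀^∞ A(t)·χ_{{h(t) ≥ 2ε}}(t) dt < ∞. -/

import Mathlib

open MeasureTheory

section Aux
open Set Filter Topology
open MeasureTheory Set Filter Topology

lemma aux_deriv (h : ℝ → ℝ) (c : ℝ) (hh : ContDiff ℝ 1 h) (x : ℝ) :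
    HasDerivWithinAt (fun t => max c (h t))
      (if h x = c then max (deriv h x) 0 else Set.indicator {t | c ≤ h t} (deriv h) x)
      (Set.Ioi x) x := by
  have hd : HasDerivAt h (deriv h x) x :=
    ((hh.differentiable one_ne_zero) x).hasDerivAt
  have hcont : Continuous h := hh.continuous
  rcases lt_trichotomy (h x) c with hx | hx | hx
  · -- h x < c : ψ = c near x
    rw [if_neg hx.ne, Set.indicator_of_notMem (by simpa using hx.not_ge)]
    have hev : ∀ᶠ t in 𝓝 x, max c (h t) = c := by
      have : ∀ᶠ t in 𝓝 x, h t < c := (hcont.continuousAt).eventually_lt continuousAt_const hx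
      filter_upwards [this] with t ht using max_eq_left ht.le
    exact ((hasDerivAt_const x c).congr_of_eventuallyEq
      (hev.mono fun t ht => ht)).hasDerivWithinAt
  · -- h x = c
    rw [if_pos hx]
    rcases lt_trichotomy (deriv h x) 0 with hd0 | hd0 | hd0
    · -- deriv < 0 : on the right, h < c, so ψ = c
      rw [max_eq_right hd0.le]
      have hslope : Tendsto (slope h x) (𝓝[>] x) (𝓝 (deriv h x)) :=
        (hasDerivAt_iff_tendsto_slope.1 hd).mono_left
          (nhdsWithin_mono x fun t ht => ne_of_gt ht)
      have hev : ∀ᶠ t in 𝓝[>] x, h t < c := by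
        have h1 : ∀ᶠ t in 𝓝[>] x, slope h x t < 0 :=
          hslope.eventually_lt_const hd0
        filter_upwards [h1, self_mem_nhdsWithin] with t ht ht'
        have hlt : (h t - h x) / (t - x) < 0 := by
          simpa [slope_def_field, div_eq_iff (sub_ne_zero.2 (ne_of_gt (Set.mem_Ioi.1 ht')) : t - x ≠ 0)] using ht
        have : h t - h x < 0 := by
          have := (div_neg_iff.1 hlt)
          rcases this with ⟨h1, h2⟩ | ⟨h1, h2⟩
          · linarith [sub_pos.2 (Set.mem_Ioi.1 ht')]
          · exact h1
        linarith [hx]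
      have heq : ∀ᶠ t in 𝓝[>] x, max c (h t) = c := by
        filter_upwards [hev] with t ht using max_eq_left ht.le
      exact (hasDerivWithinAt_const x _ c).congr_of_eventuallyEq heq (by simp [hx])
    · -- deriv = 0 : squeeze
      rw [hd0, max_self]
      rw [hasDerivWithinAt_iff_isLittleO]
      have h1 : (fun t => h t - h x) =o[𝓝 x] fun t => t - x := by
        have := hd.hasDerivWithinAt (s := Set.univ)
        have h2 := hasDerivAt_iff_isLittleO.1 hd
        simpa [hd0] using h2
      have h2 : (fun t => max c (h t) - max c (h x)) =O[𝓝 x] fun t => h t - h x := by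
        apply Asymptotics.isBigO_of_le
        intro t
        simp only [Real.norm_eq_abs]
        rw [max_comm c (h t), max_comm c (h x)]
        exact abs_max_sub_max_le_abs _ _ _
      have := h2.trans_isLittleO h1
      refine (this.mono nhdsWithin_le_nhds).congr' ?_ (by simp)
      filter_upwards with t
      simp
    · -- deriv > 0 : on the right, h > c, so ψ = h
      rw [max_eq_left hd0.le]
      have hslope : Tendsto (slope h x) (𝓝[>] x) (𝓝 (deriv h x)) :=
        (hasDerivAt_iff_tendsto_slope.1 hd).mono_left
          (nhdsWithin_mono x fun t ht => ne_of_gt ht)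
      have hev : ∀ᶠ t in 𝓝[>] x, c < h t := by
        have h1 : ∀ᶠ t in 𝓝[>] x, 0 < slope h x t :=
          hslope.eventually_const_lt hd0
        filter_upwards [h1, self_mem_nhdsWithin] with t ht ht'
        have hlt : 0 < (h t - h x) / (t - x) := by
          simpa [slope_def_field] using ht
        have htx : 0 < t - x := sub_pos.2 (Set.mem_Ioi.1 ht')
        have hpos : 0 < h t - h x := by
          rcases div_pos_iff.1 hlt with ⟨a, b⟩ | ⟨a, b⟩
          · exact a
          · linarith
        linarith [hx]
      have heq : ∀ᶠ t in 𝓝[>] x, max c (h t) = h t := by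
        filter_upwards [hev] with t ht using max_eq_right ht.le
      exact (hd.hasDerivWithinAt).congr_of_eventuallyEq heq (by simp [hx])
  · -- c < h x : ψ = h near x
    rw [if_neg hx.ne', Set.indicator_of_mem (by simpa using hx.le)]
    have hev : ∀ᶠ t in 𝓝 x, max c (h t) = h t := by
      have : ∀ᶠ t in 𝓝 x, c < h t := (continuousAt_const).eventually_lt hcont.continuousAt hx
      filter_upwards [this] with t ht using max_eq_right ht.le
    exact (hd.congr_of_eventuallyEq (hev.mono fun t ht => ht)).hasDerivWithinAt
open MeasureTheory Set Filter Topology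

lemma aux_countable (h : ℝ → ℝ) (c : ℝ) (hh : ContDiff ℝ 1 h) :
    Set.Countable {t : ℝ | h t = c ∧ deriv h t ≠ 0} := by
  set Z : Set ℝ := {t : ℝ | h t = c ∧ deriv h t ≠ 0} with hZ
  have hdisc : DiscreteTopology Z := by
    rw [discreteTopology_subtype_iff]
    intro x hx
    rw [inf_principal_eq_bot]
    obtain ⟨hxc, hxd⟩ := hx
    have hd : HasDerivAt h (deriv h x) x := ((hh.differentiable one_ne_zero) x).hasDerivAt
    have hslope : Tendsto (slope h x) (𝓝[≠] x) (𝓝 (deriv h x)) :=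
      hasDerivAt_iff_tendsto_slope.1 hd
    have hev : ∀ᶠ t in 𝓝[≠] x, slope h x t ≠ 0 := hslope.eventually_ne hxd
    filter_upwards [hev, self_mem_nhdsWithin] with t ht ht'
    intro htZ
    apply ht
    have : h t = h x := by rw [htZ.1, hxc]
    simp [slope_def_field, this]
  exact (HereditarilyLindelof_LindelofSets Z).countable hdisc

end Aux

open Set Filter Topology

theorem stmt17 (g h A : ℝ → ℝ) (ε C M : ℝ) (hε : 0 < ε) (hC : 0 < C)
    (hg0 : ∀ t, 0 ≤ g t) (hgint : IntegrableOn g (Set.Ici 0))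
    (hh : ContDiff ℝ 1 h) (hA0 : ∀ t, 0 ≤ A t)
    (hM : ∀ t, 0 ≤ t → h t ≤ M)
    (hineq : ∀ t, 0 ≤ t → 2 * ε ≤ h t → deriv h t ≤ -A t + C * h t * g t) :
    ∫⁻ t in Set.Ici (0 : ℝ),
        Set.indicator {t : ℝ | 2 * ε ≤ h t} (fun t => ENNReal.ofReal (A t)) t
      < ⊤ := by
  set M' : ℝ := max M (2 * ε) with hM'def
  have hM'ε : 2 * ε ≤ M' := le_max_right _ _
  have hM'0 : 0 < M' := lt_of_lt_of_le (by linarith) hM'ε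
  have hMM' : M ≤ M' := le_max_left _ _
  set S : Set ℝ := {t : ℝ | 2 * ε ≤ h t} with hSdef
  have hScl : IsClosed S := isClosed_le continuous_const hh.continuous
  have hS : MeasurableSet S := hScl.measurableSet
  have hdc : Continuous (deriv h) := hh.continuous_deriv le_rfl
  set D : ℝ → ℝ := fun t => if h t = 2 * ε then max (deriv h t) 0
      else S.indicator (deriv h) t with hDdef
  have hDmeas : Measurable D := by
    apply Measurable.ite
    · exact (isClosed_eq hh.continuous continuous_const).measurableSet
    · exact (hdc.max continuous_const).measurable
    · exact hdc.measurable.indicator hS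
  have hDae : D =ᵐ[volume] S.indicator (deriv h) := by
    have hsub : {t : ℝ | D t ≠ S.indicator (deriv h) t}
        ⊆ {t : ℝ | h t = 2 * ε ∧ deriv h t ≠ 0} := by
      intro t ht
      simp only [Set.mem_setOf_eq] at ht ⊢
      by_cases h1 : h t = 2 * ε
      · refine ⟨h1, fun h2 => ht ?_⟩
        have htS : t ∈ S := by simp [hSdef, h1.ge]
        simp [hDdef, h1, h2, Set.indicator_of_mem htS]
      · exact absurd (by simp [hDdef, h1]) ht
    have hz : volume {t : ℝ | D t ≠ S.indicator (deriv h) t} = 0 :=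
      measure_mono_null hsub ((aux_countable h (2 * ε) hh).measure_zero volume)
    exact (MeasureTheory.ae_iff).2 hz
  -- FTC key bound
  have key : ∀ b : ℝ, 0 ≤ b →
      ∫ t in Set.Icc (0 : ℝ) b, S.indicator (fun t => -deriv h t) t ≤ M' - 2 * ε := by
    intro b hb
    set ψ : ℝ → ℝ := fun t => max (2 * ε) (h t) with hψdef
    have hψcont : Continuous ψ := continuous_const.max hh.continuous
    have hDint : IntegrableOn D (Set.Icc 0 b) := by
      refine Integrable.mono' (hdc.abs.integrableOn_Icc) hDmeas.aestronglyMeasurable ?_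
      filter_upwards with t
      rw [Real.norm_eq_abs]
      by_cases h1 : h t = 2 * ε
      · simp only [hDdef, if_pos h1]
        rw [abs_of_nonneg (le_max_right _ _)]
        exact max_le (le_abs_self _) (abs_nonneg _)
      · simp only [hDdef, if_neg h1]
        by_cases h2 : t ∈ S
        · rw [Set.indicator_of_mem h2]
        · simp [Set.indicator_of_notMem h2]
    have ftc : ψ b - ψ 0 ≤ ∫ y in (0:ℝ)..b, D y := by
      apply intervalIntegral.sub_le_integral_of_hasDeriv_right_of_le hb hψcont.continuousOn
        (fun x _ => aux_deriv h (2 * ε) hh x) hDint (fun x _ => le_rfl)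
    rw [intervalIntegral.integral_of_le hb, ← MeasureTheory.integral_Icc_eq_integral_Ioc] at ftc
    have hDeq : ∫ y in Set.Icc (0:ℝ) b, D y = ∫ y in Set.Icc (0:ℝ) b, S.indicator (deriv h) y :=
      integral_congr_ae (ae_restrict_of_ae hDae)
    have hneg : (S.indicator (fun t => -deriv h t)) = fun t => -(S.indicator (deriv h) t) := by
      funext t
      by_cases h2 : t ∈ S <;> simp [Set.indicator_of_mem, Set.indicator_of_notMem, h2]
    rw [hneg, integral_neg]
    have hψb : 2 * ε ≤ ψ b := le_max_left _ _
    have hψ0 : ψ 0 ≤ M' := max_le hM'ε (le_trans (hM 0 le_rfl) hMM')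
    rw [hDeq] at ftc
    linarith
  -- measurable modification of g
  obtain ⟨g₁, hg₁m, hg₁e⟩ := hgint.aestronglyMeasurable
  set g₂ : ℝ → ℝ := fun t => max (g₁ t) 0 with hg₂def
  have hg₂m : Measurable g₂ := hg₁m.measurable.max measurable_const
  have hg₂e : g =ᵐ[volume.restrict (Set.Ici 0)] g₂ := by
    filter_upwards [hg₁e] with t ht
    simp [hg₂def, ← ht, max_eq_left (hg0 t)]
  have hg₂0 : ∀ t, 0 ≤ g₂ t := fun t => le_max_right _ _
  have hg₂int : IntegrableOn g₂ (Set.Ici 0) := hgint.congr hg₂e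
  set w : ℝ → ℝ := fun t => S.indicator (fun t => -deriv h t + C * M' * g₂ t) t with hwdef
  -- pointwise bound A ≤ w on S (a.e. on Ici 0)
  have hstep1 : ∫⁻ t in Set.Ici (0:ℝ),
      S.indicator (fun t => ENNReal.ofReal (A t)) t
      ≤ ∫⁻ t in Set.Ici (0:ℝ), ENNReal.ofReal (w t) := by
    apply lintegral_mono_ae
    filter_upwards [hg₂e, ae_restrict_mem measurableSet_Ici] with t htg ht
    by_cases hts : t ∈ S
    · simp only [hwdef, Set.indicator_of_mem hts]
      apply ENNReal.ofReal_le_ofReal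
      have h1 := hineq t ht hts
      have h2 : C * (h t * g t) ≤ C * (M' * g t) :=
        mul_le_mul_of_nonneg_left
          (mul_le_mul_of_nonneg_right (le_trans (hM t ht) hMM') (hg0 t)) hC.le
      rw [← htg]
      nlinarith [h1, h2]
    · simp [Set.indicator_of_notMem hts]
  -- finiteness of ∫⁻ ofReal w
  have hwle : ∀ t, 0 ≤ t → g t = g₂ t → 0 ≤ w t := by
    intro t ht htg
    by_cases hts : t ∈ S
    · rw [hwdef]
      simp only [Set.indicator_of_mem hts]
      have h1 := hineq t ht hts
      have h2 : C * (h t * g t) ≤ C * (M' * g t) :=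
        mul_le_mul_of_nonneg_left
          (mul_le_mul_of_nonneg_right (le_trans (hM t ht) hMM') (hg0 t)) hC.le
      have h3 := hA0 t
      rw [← htg]
      nlinarith
    · simp [hwdef, Set.indicator_of_notMem hts]
  set v : ℝ → ℝ := fun t => C * M' * g₂ t with hvdef
  have hvint : IntegrableOn v (Set.Ici 0) := hg₂int.const_mul _
  have hv0 : ∀ t, 0 ≤ v t := fun t => by
    simp only [hvdef]; positivity
  have hwsplit : w = fun t => S.indicator (fun t => -deriv h t) t + S.indicator v t := by
    funext t
    by_cases hts : t ∈ S <;>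
      simp [hwdef, hvdef, Set.indicator_of_mem, Set.indicator_of_notMem, hts]
  have hstep2 : ∫⁻ t in Set.Ici (0:ℝ), ENNReal.ofReal (w t)
      ≤ ENNReal.ofReal (M' - 2 * ε + ∫ t in Set.Ici (0:ℝ), v t) := by
    have hU : Set.Ici (0:ℝ) = ⋃ n : ℕ, Set.Icc (0:ℝ) n := by
      ext t
      simp only [Set.mem_Ici, Set.mem_iUnion, Set.mem_Icc]
      constructor
      · intro ht
        obtain ⟨n, hn⟩ := exists_nat_ge t
        exact ⟨n, ht, hn⟩
      · rintro ⟨n, h1, _⟩; exact h1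
    have hdir : Directed (· ⊆ ·) (fun n : ℕ => Set.Icc (0:ℝ) n) := by
      intro m n
      exact ⟨max m n, Set.Icc_subset_Icc le_rfl (by exact_mod_cast le_max_left m n),
        Set.Icc_subset_Icc le_rfl (by exact_mod_cast le_max_right m n)⟩
    conv_lhs => rw [hU]
    rw [setLIntegral_iUnion_of_directed _ hdir]
    apply iSup_le
    intro n
    have hsub : Set.Icc (0:ℝ) n ⊆ Set.Ici 0 := fun t ht => ht.1
    have huint : IntegrableOn (fun t => S.indicator (fun t => -deriv h t) t)
        (Set.Icc (0:ℝ) n) := by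
      refine Integrable.mono' (hdc.abs.integrableOn_Icc)
        ((hdc.neg.measurable.indicator hS).aestronglyMeasurable) ?_
      filter_upwards with t
      rw [Real.norm_eq_abs]
      by_cases h2 : t ∈ S
      · rw [Set.indicator_of_mem h2]; exact (abs_neg _).le.trans (le_of_eq rfl)
      · simp [Set.indicator_of_notMem h2]
    have hvint' : IntegrableOn (fun t => S.indicator v t) (Set.Icc (0:ℝ) n) :=
      ((hvint.mono_set hsub).indicator hS)
    have hwint : IntegrableOn w (Set.Icc (0:ℝ) n) := by
      rw [hwsplit]; exact huint.add hvint'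
    have hwae : 0 ≤ᵐ[volume.restrict (Set.Icc (0:ℝ) n)] w := by
      filter_upwards [ae_restrict_of_ae_restrict_of_subset hsub hg₂e,
        ae_restrict_mem measurableSet_Icc] with t htg ht
      exact hwle t ht.1 htg
    rw [← ofReal_integral_eq_lintegral_ofReal hwint hwae]
    apply ENNReal.ofReal_le_ofReal
    have hsplit : ∫ t in Set.Icc (0:ℝ) n, w t
        = (∫ t in Set.Icc (0:ℝ) n, S.indicator (fun t => -deriv h t) t)
          + ∫ t in Set.Icc (0:ℝ) n, S.indicator v t := by
      rw [hwsplit]; exact integral_add huint hvint'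
    have h1 : ∫ t in Set.Icc (0:ℝ) n, S.indicator (fun t => -deriv h t) t ≤ M' - 2 * ε :=
      key n (Nat.cast_nonneg n)
    have h2 : ∫ t in Set.Icc (0:ℝ) n, S.indicator v t ≤ ∫ t in Set.Ici (0:ℝ), v t := by
      calc ∫ t in Set.Icc (0:ℝ) n, S.indicator v t
          ≤ ∫ t in Set.Icc (0:ℝ) n, v t := by
            apply integral_mono hvint' (hvint.mono_set hsub)
            intro t
            exact Set.indicator_le_self' (fun t _ => hv0 t) t
        _ ≤ ∫ t in Set.Ici (0:ℝ), v t := by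
            apply setIntegral_mono_set hvint
            · filter_upwards with t using hv0 t
            · exact HasSubset.Subset.eventuallyLE hsub
    linarith
  calc ∫⁻ t in Set.Ici (0:ℝ), S.indicator (fun t => ENNReal.ofReal (A t)) t
      ≤ ENNReal.ofReal (M' - 2 * ε + ∫ t in Set.Ici (0:ℝ), v t) := hstep1.trans hstep2
    _ < ⊤ := ENNReal.ofReal_lt_top
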